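/- Let T be a finite tree (connected acyclic simple graph) with n ≥ 2 vertices, a root vertex r, and height D (the maximum distance from r to a vertex), and let k be a positive integer. Then there exist k walks in T, each starting at r and each of length (number of edges) at most D + ⌈2(n−1)/k⌉, such that every vertex of T lies on at least one of the walks. In particular, k agents that know T in advance can explore T in O(n/k + D) rounds. -/

import Mathlib

namespace SimpleGraph.Walk

variable {V : Type*} {G : SimpleGraph V}

lemma getVert_nil' {u : V} (i : ℕ) : (Walk.nil : G.Walk u u).getVert i = u := rfl

/-- The walk consisting of the first `n` edges of `p`. -/
def takeW : {u v : V} → (p : G.Walk u v) → (n : ℕ) → G.Walk u (p.getVert n)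
  | _, _, .nil, _ => .nil
  | _, _, .cons _ _, 0 => .nil
  | _, _, .cons h q, _ + 1 => .cons h (q.takeW _)

lemma length_takeW : ∀ {u v : V} (p : G.Walk u v) (n : ℕ),
    (p.takeW n).length = min n p.length
  | _, _, .nil, n => by simp [takeW]
  | _, _, .cons _ _, 0 => by simp [takeW]; rfl
  | _, _, .cons h q, n + 1 => by
      simp [takeW, length_takeW q n, Nat.succ_min_succ]

lemma getVert_takeW : ∀ {u v : V} (p : G.Walk u v) (n i : ℕ),
    (p.takeW n).getVert i = p.getVert (min i n)
  | _, _, .nil, n, i => rfl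
  | _, _, .cons _ _, 0, i => by simp [takeW, getVert_nil']; rfl
  | _, _, .cons h q, n + 1, 0 => by exact getVert_zero _
  | _, _, .cons h q, n + 1, i + 1 => by
      simpa [takeW, getVert_cons_succ, Nat.succ_min_succ] using getVert_takeW q n i

lemma getVert_drop' : ∀ {u v : V} (p : G.Walk u v) (n i : ℕ),
    (p.drop n).getVert i = p.getVert (n + i)
  | _, _, .nil, n, i => by cases n <;> rfl
  | _, _, .cons h q, 0, i => by simp [drop]
  | _, _, .cons h q, n + 1, i => by
      rw [show n + 1 + i = (n + i) + 1 from by omega]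
      conv_rhs => rw [getVert_cons_succ]
      rw [drop_getVert, show n + 1 + i = (n + i) + 1 from by omega, getVert_cons_succ]

lemma getVert_mem_support' {u v : V} (p : G.Walk u v) (m : ℕ) :
    p.getVert m ∈ p.support := by
  rw [mem_support_iff_exists_getVert]
  by_cases h : m ≤ p.length
  · exact ⟨m, rfl, h⟩
  · exact ⟨p.length, by rw [getVert_length, getVert_of_length_le p (le_of_not_ge h)], le_rfl⟩

end SimpleGraph.Walk

namespace SimpleGraph.Walk

variable {V : Type*} {G : SimpleGraph V} [DecidableEq V]

lemma tour_extend {r : V} : ∀ {x v : V} (P : G.Walk x v) (w : G.Walk r r),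
    x ∈ w.support →
    ∃ w' : G.Walk r r, (∀ y ∈ w.support, y ∈ w'.support) ∧ v ∈ w'.support ∧
      w'.length + 2 * w.support.toFinset.card ≤ w.length + 2 * w'.support.toFinset.card := by
  intro x v P
  induction P with
  | nil => exact fun w hx => ⟨w, fun y hy => hy, hx, le_rfl⟩
  | @cons x y v h P ih =>
    intro w hx
    by_cases hy : y ∈ w.support
    · exact ih w hy
    · set t := w.takeUntil x hx with ht
      set d := w.dropUntil x hx with hd
      set w1 : G.Walk r r := t.append (Walk.cons h (Walk.cons h.symm d)) with hw1
      have hspec : t.append d = w := w.take_spec hx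
      have hsup1 : w1.support = t.support ++ (y :: d.support) := by
        rw [hw1, support_append]; simp
      have hsupw : w.support = t.support ++ d.support.tail := by
        rw [← hspec, support_append]
      have hyw1 : y ∈ w1.support := by rw [hsup1]; simp
      have hsub : ∀ z ∈ w.support, z ∈ w1.support := by
        intro z hz
        rw [hsupw] at hz; rw [hsup1]
        rcases List.mem_append.1 hz with h1 | h2
        · exact List.mem_append.2 (Or.inl h1)
        · exact List.mem_append.2 (Or.inr (List.mem_cons_of_mem _ (List.mem_of_mem_tail h2)))
      have hcard : w1.support.toFinset = insert y w.support.toFinset := by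
        ext z
        simp only [List.mem_toFinset, Finset.mem_insert, hsup1, List.mem_append, List.mem_cons]
        constructor
        · rintro (hz | rfl | hz)
          · exact Or.inr (support_takeUntil_subset w hx hz)
          · exact Or.inl rfl
          · exact Or.inr (support_dropUntil_subset w hx hz)
        · rintro (rfl | hz)
          · exact Or.inr (Or.inl rfl)
          · rw [hsupw] at hz
            rcases List.mem_append.1 hz with h1 | h2
            · exact Or.inl h1
            · exact Or.inr (Or.inr (List.mem_of_mem_tail h2))
      have hcard' : w1.support.toFinset.card = w.support.toFinset.card + 1 := by
        rw [hcard, Finset.card_insert_of_notMem (by simpa using hy)]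
      have hlen : w1.length = w.length + 2 := by
        have h2 := congrArg Walk.length hspec
        rw [length_append] at h2
        rw [hw1, length_append, length_cons, length_cons]
        omega
      obtain ⟨w', hsub', hv, hle⟩ := ih w1 hyw1
      exact ⟨w', fun z hz => hsub' z (hsub z hz), hv, by omega⟩

lemma exists_tour {r : V} (S : Finset V) (hS : ∀ v ∈ S, G.Reachable r v) :
    ∃ w : G.Walk r r, (∀ v ∈ S, v ∈ w.support) ∧
      w.length + 2 ≤ 2 * w.support.toFinset.card := by
  induction S using Finset.induction with
  | empty => exact ⟨Walk.nil, by simp, by simp⟩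
  | @insert v S hvS ih =>
    obtain ⟨w, hw1, hw2⟩ := ih (fun x hx => hS x (Finset.mem_insert_of_mem hx))
    obtain ⟨w', hsub, hv', hle⟩ :=
      tour_extend ((hS v (Finset.mem_insert_self v S)).some) w (start_mem_support w)
    have hcardle : w.support.toFinset.card ≤ w'.support.toFinset.card :=
      Finset.card_le_card (fun z hz => List.mem_toFinset.2 (hsub z (List.mem_toFinset.1 hz)))
    refine ⟨w', ?_, by omega⟩
    intro x hx
    rcases Finset.mem_insert.1 hx with rfl | hx
    · exact hv'
    · exact hsub x (hw1 x hx)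

end SimpleGraph.Walk

/-- A rooted tree: a finite connected acyclic simple graph on labeled
vertices (natural numbers) with a distinguished root. `verts` is the (finite)
vertex set; all edges join vertices of `verts` and every vertex of `verts` is
reachable from the root. -/
structure ExplorationTree where
  G : SimpleGraph ℕ
  verts : Finset ℕ
  root : ℕ
  root_mem : root ∈ verts
  adj_mem : ∀ u v : ℕ, G.Adj u v → u ∈ verts ∧ v ∈ verts
  reach : ∀ v ∈ verts, G.Reachable root v
  acyclic : G.IsAcyclic

namespace ExplorationTree

/-- The number of vertices of a rooted tree. -/
def card (T : ExplorationTree) : ℕ := T.verts.card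

/-- The height of a rooted tree: the maximum graph distance from the root. -/
noncomputable def height (T : ExplorationTree) : ℕ :=
  T.verts.sup fun v => T.G.dist T.root v

lemma support_mem_verts (T : ExplorationTree) :
    ∀ {a b : ℕ} (w : T.G.Walk a b), a ∈ T.verts → ∀ x ∈ w.support, x ∈ T.verts := by
  intro a b w
  induction w with
  | nil => intro ha x hx; simp at hx; subst hx; exact ha
  | cons h p ih =>
    intro ha x hx
    rw [SimpleGraph.Walk.support_cons] at hx
    rcases List.mem_cons.1 hx with rfl | hx
    · exact ha
    · exact ih (T.adj_mem _ _ h).2 x hx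

end ExplorationTree

/-- `CoverWalks T k ℓ`: there exist `k` walks in `T`, each starting at the
root and of length (number of edges) at most `ℓ`, covering all vertices of `T`. -/
def CoverWalks (T : ExplorationTree) (k ℓ : ℕ) : Prop :=
  ∃ (e : Fin k → ℕ) (w : ∀ i : Fin k, T.G.Walk T.root (e i)),
    (∀ i, (w i).length ≤ ℓ) ∧ ∀ v ∈ T.verts, ∃ i, v ∈ (w i).support

/-- Every rooted tree with `n ≥ 2` vertices and height `D`
can be covered by `k` walks from the root, each of length at most
`D + ⌈2(n−1)/k⌉`; hence offline exploration takes `O(n/k + D)` rounds. -/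
theorem offline_upper_bound (T : ExplorationTree) (hn : 2 ≤ T.card)
    (k : ℕ) (hk : 0 < k) :
    CoverWalks T k (T.height + ⌈(2 * ((T.card : ℝ) - 1)) / (k : ℝ)⌉₊) := by
  classical
  set c := ⌈(2 * ((T.card : ℝ) - 1)) / (k : ℝ)⌉₊ with hc
  obtain ⟨w, hwcov, hwlen⟩ := SimpleGraph.Walk.exists_tour T.verts T.reach
  have hsupverts : ∀ x ∈ w.support, x ∈ T.verts :=
    T.support_mem_verts w T.root_mem
  have hcardle : w.support.toFinset.card ≤ T.card :=
    Finset.card_le_card (fun z hz => hsupverts z (List.mem_toFinset.1 hz))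
  have hL : w.length + 2 ≤ 2 * T.card := le_trans hwlen (by omega)
  have hcR : (2 : ℝ) ≤ (T.card : ℝ) := by exact_mod_cast hn
  have hm : (2 * (T.card - 1) : ℕ) ≤ c * k := by
    have h1 : ((2 * (T.card - 1) : ℕ) : ℝ) = 2 * ((T.card : ℝ) - 1) := by
      have h2 : (1:ℕ) ≤ T.card := by omega
      push_cast [h2]
      ring
    have h2 : 2 * ((T.card : ℝ) - 1) ≤ (c : ℝ) * (k : ℝ) := by
      have h3 := Nat.le_ceil ((2 * ((T.card : ℝ) - 1)) / (k : ℝ))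
      rw [div_le_iff₀ (by positivity : (0:ℝ) < (k:ℝ))] at h3
      rw [← hc] at h3
      exact h3
    have h4 : ((2 * (T.card - 1) : ℕ) : ℝ) ≤ ((c * k : ℕ) : ℝ) := by
      rw [h1]; push_cast; exact h2
    exact_mod_cast h4
  have hck : w.length ≤ c * k := le_trans (by omega) hm
  have hcpos : 0 < c :=
    Nat.ceil_pos.mpr (div_pos (by linarith) (by positivity))
  have hget : ∀ m : ℕ, w.getVert m ∈ T.verts := fun m =>
    hsupverts _ (SimpleGraph.Walk.getVert_mem_support' w m)
  choose p hp using
    (fun i : Fin k => (T.reach _ (hget (i.val * c))).exists_walk_length_eq_dist)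
  refine ⟨fun i => (w.drop (i.val * c)).getVert c,
    fun i => (p i).append ((w.drop (i.val * c)).takeW c), ?_, ?_⟩
  · intro i
    rw [SimpleGraph.Walk.length_append]
    have h1 : (p i).length ≤ T.height := by
      rw [hp i]
      exact Finset.le_sup (hget (i.val * c))
    have h2 : ((w.drop (i.val * c)).takeW c).length ≤ c := by
      rw [SimpleGraph.Walk.length_takeW]; exact min_le_left _ _
    omega
  · intro v hv
    obtain ⟨j, hj1, hj2⟩ :=
      SimpleGraph.Walk.mem_support_iff_exists_getVert.1 (hwcov v hv)
    set i0 := min (j / c) (k - 1) with hi0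
    have hik : i0 < k := lt_of_le_of_lt (min_le_right _ _) (by omega)
    have hbound : i0 * c ≤ j ∧ j ≤ i0 * c + c := by
      rcases le_or_gt (j / c) (k - 1) with hle | hlt
      · have hi : i0 = j / c := min_eq_left hle
        constructor
        · rw [hi]; exact Nat.div_mul_le_self j c
        · rw [hi]
          have h5 : j % c < c := Nat.mod_lt j hcpos
          have h6 : c * (j / c) + j % c = j := Nat.div_add_mod j c
          have h7 : j / c * c = c * (j / c) := Nat.mul_comm _ _
          omega
      · have hkle : k ≤ j / c := by omega
        have h8 : k * c ≤ j := (Nat.le_div_iff_mul_le hcpos).1 hkle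
        have hjck : j ≤ c * k := le_trans hj2 hck
        have hi : i0 = k - 1 := min_eq_right (by omega)
        rw [hi]
        have h9 : (k - 1) * c + c = k * c := by
          have h10 : k - 1 + 1 = k := by omega
          calc (k - 1) * c + c = (k - 1 + 1) * c := by ring
          _ = k * c := by rw [h10]
        constructor
        · exact le_trans (le_trans (Nat.mul_le_mul_right c (Nat.sub_le k 1)) h8) le_rfl
        · rw [h9, Nat.mul_comm]; exact hjck
    obtain ⟨hb1, hb2⟩ := hbound
    refine ⟨⟨i0, hik⟩, ?_⟩
    rw [SimpleGraph.Walk.mem_support_append_iff]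
    right
    have hv' : ((w.drop (i0 * c)).takeW c).getVert (j - i0 * c) = v := by
      rw [SimpleGraph.Walk.getVert_takeW, min_eq_left (by omega),
        SimpleGraph.Walk.getVert_drop',
        show i0 * c + (j - i0 * c) = j from by omega]
      exact hj1
    rw [← hv']
    exact SimpleGraph.Walk.getVert_mem_support' _ _
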